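/- Characterisation of the admissible set via critical values: let N≥1, ε_N>0 and λ⁺ ∈ ℝ^N_<. Define P⁺(x)=∏_{k=1}^N(x−λ_k⁺). Then the following are equivalent: (i) the polynomial P⁺ + 4ε_N has N distinct real roots; (ii) there exists a vector η ∈ ℝ^N_< such that, setting P(x)=∏_{k=1}^N(x−η_k) and letting ζ₁,…,ζ_{N−1} ∈ ℝ be the roots of P′, one has |P(ζ_k)| > 2ε_N for all k∈{1,…,N−1} and λ₁⁺,…,λ_N⁺ are exactly the roots of P − 2ε_N. Moreover the vector η in (ii), if it exists, is unique. -/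

import Mathlib

/-- The monic polynomial `P(x) = ∏_k (x − η_k)`, as a function. -/
noncomputable def Pprod {N : ℕ} (eta : Fin N → ℝ) (x : ℝ) : ℝ := ∏ k, (x - eta k)

/-- The condition on `η` appearing in item (ii): `η` is strictly increasing,
`λ₁⁺,…,λ_N⁺` are exactly the roots of `P − 2ε`, and every critical point `ζ` of `P`
satisfies `|P(ζ)| > 2ε`. -/
def EtaCond (N : ℕ) (ε : ℝ) (lam eta : Fin N → ℝ) : Prop :=
  StrictMono eta ∧
  (∀ x : ℝ, Pprod eta x - 2 * ε = ∏ k, (x - lam k)) ∧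
  (∀ z : ℝ, deriv (Pprod eta) z = 0 → 2 * ε < |Pprod eta z|)

namespace Adm

open Polynomial Finset Set

variable {N : ℕ}

noncomputable def pp (eta : Fin N → ℝ) : Polynomial ℝ := ∏ k, (X - C (eta k))

def idx1 (k : Fin (N-1)) : Fin N := ⟨k.1, lt_of_lt_of_le k.2 (Nat.sub_le N 1)⟩
def idx2 (k : Fin (N-1)) : Fin N := ⟨k.1+1, Nat.add_lt_of_lt_sub k.2⟩




lemma Pprod_eq_eval (eta : Fin N → ℝ) (x : ℝ) : Pprod eta x = (pp eta).eval x := by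
  simp [Pprod, pp, eval_prod]

lemma pp_monic (eta : Fin N → ℝ) : (pp eta).Monic :=
  monic_prod_of_monic _ _ fun k _ => monic_X_sub_C _

lemma pp_natDegree (eta : Fin N → ℝ) : (pp eta).natDegree = N := by
  simpa [pp, natDegree_X_sub_C] using
    natDegree_prod (R := ℝ) univ (fun k => X - C (eta k)) (fun k _ => X_sub_C_ne_zero _)

lemma continuous_Pprod (eta : Fin N → ℝ) : Continuous (Pprod eta) := by
  have : Pprod eta = fun x => (pp eta).eval x := funext fun x => Pprod_eq_eval eta x
  rw [this]; exact (pp eta).continuous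

lemma deriv_Pprod (eta : Fin N → ℝ) (z : ℝ) :
    deriv (Pprod eta) z = ((pp eta).derivative).eval z := by
  have : Pprod eta = fun x => (pp eta).eval x := funext fun x => Pprod_eq_eval eta x
  rw [this, Polynomial.deriv]

lemma Pprod_root (eta : Fin N → ℝ) (i : Fin N) : Pprod eta (eta i) = 0 :=
  Finset.prod_eq_zero (mem_univ i) (by ring)

/-- sign of a product of nonzero reals -/
lemma sign_prod {ι : Type*} [DecidableEq ι] (s : Finset ι) (f : ι → ℝ) (h : ∀ i ∈ s, f i ≠ 0) :
    0 < (-1 : ℝ) ^ (s.filter (fun i => f i < 0)).card * ∏ i ∈ s, f i := by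
  classical
  induction s using Finset.induction_on with
  | empty => simp
  | insert a s hns ih =>
    have ha : f a ≠ 0 := h a (mem_insert_self _ _)
    have hs : ∀ i ∈ s, f i ≠ 0 := fun i hi => h i (mem_insert_of_mem hi)
    have H := ih hs
    rw [Finset.filter_insert, Finset.prod_insert hns]
    by_cases hfa : f a < 0
    · rw [if_pos hfa, Finset.card_insert_of_notMem (by simp [hns]), pow_succ]
      have : (-1:ℝ) ^ (s.filter (fun i => f i < 0)).card * -1 * (f a * ∏ i ∈ s, f i)
          = ((-1) * f a) * ((-1:ℝ) ^ (s.filter (fun i => f i < 0)).card * ∏ i ∈ s, f i) := by ring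
      rw [this]
      exact mul_pos (by linarith) H
    · rw [if_neg hfa]
      have hfa' : 0 < f a := lt_of_le_of_ne (not_lt.1 hfa) (Ne.symm ha)
      have : (-1:ℝ) ^ (s.filter (fun i => f i < 0)).card * (f a * ∏ i ∈ s, f i)
          = f a * ((-1:ℝ) ^ (s.filter (fun i => f i < 0)).card * ∏ i ∈ s, f i) := by ring
      rw [this]
      exact mul_pos hfa' H

/-- sign of `Pprod` at a non-root -/
lemma sign_Pprod (eta : Fin N → ℝ) (x : ℝ) (h : ∀ i, x ≠ eta i) :
    0 < (-1 : ℝ) ^ (univ.filter (fun i => x < eta i)).card * Pprod eta x := by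
  classical
  have := sign_prod (univ : Finset (Fin N)) (fun i => x - eta i)
    (fun i _ => sub_ne_zero.2 (h i))
  simpa [Pprod, sub_neg] using this



lemma card_filter_val_lt (v : ℕ) (hv : v ≤ N) :
    (univ.filter (fun i : Fin N => i.1 < v)).card = v := by
  classical
  have : (univ.filter (fun i : Fin N => i.1 < v))
      = (Finset.range v).attachFin (fun m hm => lt_of_lt_of_le (Finset.mem_range.1 hm) hv) := by
    ext i; simp [Finset.mem_attachFin]
  rw [this, Finset.card_attachFin, Finset.card_range]

lemma card_filter_le_val (v : ℕ) (hv : v ≤ N) :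
    (univ.filter (fun i : Fin N => v ≤ i.1)).card = N - v := by
  classical
  have h := Finset.card_filter_add_card_filter_not
    (s := (univ : Finset (Fin N))) (p := fun i : Fin N => i.1 < v)
  have h2 : (univ.filter (fun i : Fin N => ¬ i.1 < v)) = (univ.filter (fun i : Fin N => v ≤ i.1)) := by
    ext i; simp [not_lt]
  rw [card_filter_val_lt v hv, h2, Finset.card_univ, Fintype.card_fin] at h
  omega

lemma region {lam : Fin N → ℝ} (hlam : StrictMono lam) {x : ℝ} (hx : ∀ i, x ≠ lam i) (i : Fin N) :
    lam i < x ↔ i.1 < (univ.filter (fun j => lam j < x)).card := by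
  classical
  constructor
  · intro hi
    have hsub : Finset.Iic i ⊆ univ.filter (fun j => lam j < x) := by
      intro j hj
      simp only [Finset.mem_Iic] at hj
      simp only [Finset.mem_filter, Finset.mem_univ, true_and]
      exact lt_of_le_of_lt (hlam.monotone hj) hi
    have := Finset.card_le_card hsub
    rw [Fin.card_Iic] at this
    omega
  · intro hv
    by_contra hcon
    have hxi : x < lam i := lt_of_le_of_ne (not_lt.1 hcon) (hx i)
    have hsub : univ.filter (fun j => lam j < x) ⊆ Finset.Iio i := by
      intro j hj
      simp only [Finset.mem_filter, Finset.mem_univ, true_and] at hj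
      simp only [Finset.mem_Iio]
      exact hlam.lt_iff_lt.1 (lt_trans hj hxi)
    have := Finset.card_le_card hsub
    rw [Fin.card_Iio] at this
    omega




lemma ne_eta_of_Ioo {eta : Fin N → ℝ} (he : StrictMono eta) (k : Fin (N-1)) {x : ℝ}
    (hx : x ∈ Set.Ioo (eta (idx1 k)) (eta (idx2 k))) (i : Fin N) : x ≠ eta i := by
  rcases le_or_gt i.1 k.1 with h | h
  · have : eta i ≤ eta (idx1 k) := he.monotone (by simpa [idx1, Fin.le_def] using h)
    exact fun hc => absurd (hc ▸ lt_of_le_of_lt this hx.1) (lt_irrefl _)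
  · have : eta (idx2 k) ≤ eta i := he.monotone (by simpa [idx2, Fin.le_def] using h)
    exact ne_of_lt (lt_of_lt_of_le hx.2 this)

lemma sign_Pprod_Ioo {eta : Fin N → ℝ} (he : StrictMono eta) (k : Fin (N-1)) {x : ℝ}
    (hx : x ∈ Set.Ioo (eta (idx1 k)) (eta (idx2 k))) :
    0 < (-1 : ℝ) ^ (N - (k.1+1)) * Pprod eta x := by
  classical
  have hne := ne_eta_of_Ioo he k hx
  have hfe : (univ.filter (fun i : Fin N => x < eta i))
      = (univ.filter (fun i : Fin N => k.1+1 ≤ i.1)) := by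
    ext i
    simp only [Finset.mem_filter, Finset.mem_univ, true_and]
    constructor
    · intro hxi
      by_contra hcon
      have : eta i ≤ eta (idx1 k) := he.monotone (by simp [idx1, Fin.le_def]; omega)
      have : eta i < x := lt_of_le_of_lt this hx.1
      linarith
    · intro hi
      have : eta (idx2 k) ≤ eta i := he.monotone (by simpa [idx2, Fin.le_def] using hi)
      exact lt_of_lt_of_le hx.2 this
  have := sign_Pprod eta x hne
  rwa [hfe, card_filter_le_val (k.1+1) (Nat.add_lt_of_lt_sub k.2).le] at this

lemma rolle_choose {eta : Fin N → ℝ} (he : StrictMono eta) :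
    ∃ ζ : Fin (N-1) → ℝ, ∀ k, ζ k ∈ Set.Ioo (eta (idx1 k)) (eta (idx2 k)) ∧
      deriv (Pprod eta) (ζ k) = 0 := by
  have H : ∀ k : Fin (N-1), ∃ z, z ∈ Set.Ioo (eta (idx1 k)) (eta (idx2 k)) ∧
      deriv (Pprod eta) z = 0 := by
    intro k
    have hlt : eta (idx1 k) < eta (idx2 k) := he (by simp [idx1, idx2, Fin.lt_def])
    obtain ⟨c, hc, hc0⟩ := exists_deriv_eq_zero hlt ((continuous_Pprod eta).continuousOn)
      (by rw [Pprod_root, Pprod_root])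
    exact ⟨c, hc, hc0⟩
  choose ζ h1 h2 using H
  exact ⟨ζ, fun k => ⟨h1 k, h2 k⟩⟩

lemma top_sign (hN : 1 ≤ N) {eta : Fin N → ℝ} (he : StrictMono eta) (c : ℝ) :
    0 < Pprod eta (eta ⟨N-1, Nat.sub_lt hN one_pos⟩ + (1 + |c|)) + c := by
  set x := eta ⟨N-1, Nat.sub_lt hN one_pos⟩ + (1 + |c|) with hxdef
  have hfac : ∀ k : Fin N, 1 + |c| ≤ x - eta k := by
    intro k
    have : eta k ≤ eta ⟨N-1, Nat.sub_lt hN one_pos⟩ := he.monotone (by simp [Fin.le_def]; omega)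
    simp only [hxdef]; linarith
  have hprod : (1 + |c|) ^ N ≤ Pprod eta x := by
    rw [Pprod]
    calc (1 + |c|)^N = ∏ _k : Fin N, (1 + |c|) := by
          rw [Finset.prod_const, Finset.card_univ, Fintype.card_fin]
      _ ≤ ∏ k, (x - eta k) := Finset.prod_le_prod (fun _ _ => by positivity) (fun k _ => hfac k)
  have hpow : (1 + |c|) ≤ (1 + |c|) ^ N := by
    calc (1 + |c|) = (1 + |c|)^1 := (pow_one _).symm
      _ ≤ (1 + |c|)^N := pow_le_pow_right₀ (by have := abs_nonneg c; linarith) hN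
  have := neg_abs_le c
  linarith

lemma bot_sign (hN : 1 ≤ N) {eta : Fin N → ℝ} (he : StrictMono eta) (c : ℝ) :
    0 < (-1 : ℝ)^N * (Pprod eta (eta ⟨0, hN⟩ - (1 + |c|)) + c) := by
  set x := eta ⟨0, hN⟩ - (1 + |c|) with hxdef
  have hfac : ∀ k : Fin N, 1 + |c| ≤ eta k - x := by
    intro k
    have : eta ⟨0, hN⟩ ≤ eta k := he.monotone (by simp [Fin.le_def])
    simp only [hxdef]; linarith
  have key : (-1 : ℝ)^N * Pprod eta x = ∏ k, (eta k - x) := by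
    calc (-1:ℝ)^N * Pprod eta x
        = (∏ _k : Fin N, (-1:ℝ)) * ∏ k, (x - eta k) := by
          rw [Finset.prod_const, Finset.card_univ, Fintype.card_fin, Pprod]
      _ = ∏ k, ((-1) * (x - eta k)) := (Finset.prod_mul_distrib).symm
      _ = ∏ k, (eta k - x) := by apply Finset.prod_congr rfl; intros; ring
  have hprod : (1 + |c|) ^ N ≤ ∏ k, (eta k - x) := by
    calc (1 + |c|)^N = ∏ _k : Fin N, (1 + |c|) := by
          rw [Finset.prod_const, Finset.card_univ, Fintype.card_fin]
      _ ≤ ∏ k, (eta k - x) := Finset.prod_le_prod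
          (fun _ _ => by have := abs_nonneg c; linarith) (fun k _ => hfac k)
  have hpow : (1 + |c|) ≤ (1 + |c|) ^ N := by
    calc (1 + |c|) = (1 + |c|)^1 := (pow_one _).symm
      _ ≤ (1 + |c|)^N := pow_le_pow_right₀ (by have := abs_nonneg c; linarith) hN
  have habs : -|c| ≤ (-1:ℝ)^N * c := by
    have h1 : |(-1:ℝ)^N * c| = |c| := by
      rw [abs_mul, abs_pow, abs_neg, abs_one, one_pow, one_mul]
    have := neg_abs_le ((-1:ℝ)^N * c)
    rw [h1] at this; exact this
  have hexp : (-1:ℝ)^N * (Pprod eta x + c) = (-1:ℝ)^N * Pprod eta x + (-1:ℝ)^N * c := by ring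
  rw [hexp, key]
  linarith


lemma exists_roots_of_signs {g : ℝ → ℝ} (hg : Continuous g) (t : Fin (N+1) → ℝ)
    (ht : StrictMono t) (hsign : ∀ j : Fin (N+1), 0 < (-1:ℝ)^(N - j.1) * g (t j)) :
    ∃ r : Fin N → ℝ, StrictMono r ∧ ∀ k, g (r k) = 0 := by
  have H : ∀ k : Fin N, ∃ z, z ∈ Set.Ioo (t k.castSucc) (t k.succ) ∧ g z = 0 := by
    intro k
    have hlt : t k.castSucc < t k.succ := ht (Fin.castSucc_lt_succ (i := k))
    have h1 := hsign k.castSucc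
    have h2 := hsign k.succ
    simp only [Fin.coe_castSucc, Fin.val_succ] at h1 h2
    have hk := k.2
    have hexp : N - k.1 = (N - (k.1+1)) + 1 := by omega
    rcases Nat.even_or_odd (N - (k.1+1)) with he | ho
    · have e1 : ((-1:ℝ))^(N - (k.1+1)) = 1 := he.neg_one_pow
      have e2 : ((-1:ℝ))^(N - k.1) = -1 := by rw [hexp, pow_succ, e1]; ring
      rw [e2] at h1; rw [e1] at h2
      obtain ⟨z, hz, hz0⟩ := intermediate_value_Ioo hlt.le hg.continuousOn
        (show (0:ℝ) ∈ Set.Ioo (g (t k.castSucc)) (g (t k.succ)) from ⟨by linarith, by linarith⟩)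
      exact ⟨z, hz, hz0⟩
    · have e1 : ((-1:ℝ))^(N - (k.1+1)) = -1 := ho.neg_one_pow
      have e2 : ((-1:ℝ))^(N - k.1) = 1 := by rw [hexp, pow_succ, e1]; ring
      rw [e2] at h1; rw [e1] at h2
      obtain ⟨z, hz, hz0⟩ := intermediate_value_Ioo' hlt.le hg.continuousOn
        (show (0:ℝ) ∈ Set.Ioo (g (t k.succ)) (g (t k.castSucc)) from ⟨by linarith, by linarith⟩)
      exact ⟨z, hz, hz0⟩
  choose r hr1 hr2 using H
  refine ⟨r, ?_, hr2⟩
  intro k k' hkk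
  have h1 : r k < t k.succ := (hr1 k).2
  have h2 : t k'.castSucc < r k' := (hr1 k').1
  have h3 : t k.succ ≤ t k'.castSucc := ht.monotone (by
    simp only [Fin.le_def, Fin.val_succ, Fin.coe_castSucc]; exact hkk)
  linarith

lemma eq_prod_of_roots {p : Polynomial ℝ} (hp : p.Monic) (hdeg : p.natDegree = N)
    (r : Fin N → ℝ) (hinj : Function.Injective r) (hroots : ∀ k, p.IsRoot (r k)) :
    p = ∏ k, (X - C (r k)) := by
  classical
  have hp0 : p ≠ 0 := hp.ne_zero
  set s : Multiset ℝ := (univ : Finset (Fin N)).val.map r with hsdef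
  have hs : s ≤ p.roots := by
    rw [Multiset.le_iff_count]
    intro a
    by_cases ha : a ∈ s
    · obtain ⟨k, _, hk⟩ := Multiset.mem_map.1 ha
      subst hk
      have hc1 : s.count (r k) = 1 := by
        rw [hsdef, Multiset.count_map_eq_count' r _ hinj]
        exact Multiset.count_eq_one_of_mem (univ : Finset (Fin N)).nodup (by simp)
      rw [hc1, count_roots]
      exact (rootMultiplicity_pos hp0).2 (hroots k)
    · rw [Multiset.count_eq_zero_of_notMem ha]
      exact Nat.zero_le _
  have hscard : Multiset.card s = N := by simp [hsdef]
  have hse : s = p.roots := Multiset.eq_of_le_of_card_le hs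
    (by rw [hscard, ← hdeg]; exact p.card_roots')
  have hsplits : Splits p := splits_iff_card_roots.2 (by rw [← hse, hscard, hdeg])
  have hfac := hsplits.eq_prod_roots_of_monic hp
  rw [← hse, hsdef, Multiset.map_map] at hfac
  rw [hfac, Finset.prod_eq_multiset_prod]
  rfl


lemma lemA (hN : 1 ≤ N) {eta : Fin N → ℝ} (he : StrictMono eta) (c : ℝ)
    (h : ∀ z, deriv (Pprod eta) z = 0 → 0 < Pprod eta z * (Pprod eta z + c)) :
    ∃ r : Fin N → ℝ, StrictMono r ∧ ∀ x, Pprod eta x + c = Pprod r x := by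
  classical
  obtain ⟨ζ, hζ⟩ := rolle_choose he
  set g : ℝ → ℝ := fun x => Pprod eta x + c with hgdef
  set t : Fin (N+1) → ℝ := fun j =>
    if hj0 : j.1 = 0 then eta ⟨0, hN⟩ - (1 + |c|)
    else if hjN : j.1 = N then eta ⟨N-1, Nat.sub_lt hN one_pos⟩ + (1 + |c|)
    else ζ ⟨j.1 - 1, by have := j.2; omega⟩ with htdef
  have ht0 : ∀ (j : Fin (N+1)), j.1 = 0 → t j = eta ⟨0, hN⟩ - (1 + |c|) := by
    intro j hj; simp only [htdef]; rw [dif_pos hj]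
  have htN : ∀ (j : Fin (N+1)), j.1 = N → t j = eta ⟨N-1, Nat.sub_lt hN one_pos⟩ + (1 + |c|) := by
    intro j hj; simp only [htdef]; rw [dif_neg (by omega), dif_pos hj]
  have htm : ∀ (j : Fin (N+1)) (h1 : j.1 ≠ 0) (h2 : j.1 ≠ N),
      t j = ζ ⟨j.1 - 1, by have := j.2; omega⟩ := by
    intro j h1 h2; simp only [htdef]; rw [dif_neg h1, dif_neg h2]
  -- midpoint sign facts
  have hmid : ∀ (k : Fin (N-1)), 0 < (-1:ℝ)^(N - (k.1+1)) * g (ζ k) := by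
    intro k
    have hsP := sign_Pprod_Ioo he k (hζ k).1
    have hcrit := h (ζ k) (hζ k).2
    set a := Pprod eta (ζ k) with ha
    rcases Nat.even_or_odd (N - (k.1+1)) with hev | hod
    · rw [hev.neg_one_pow] at hsP ⊢
      have ha0 : 0 < a := by linarith [hsP]
      have : 0 < a + c := by nlinarith
      simpa [hgdef] using this
    · rw [hod.neg_one_pow] at hsP ⊢
      have ha0 : a < 0 := by nlinarith
      have hac : a + c < 0 := by nlinarith
      have hg : g (ζ k) = a + c := by simp [hgdef, ha]
      rw [hg]; linarith
  -- strict monotonicity of t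
  have ht : StrictMono t := by
    rw [Fin.strictMono_iff_lt_succ]
    intro i
    have hi2 := i.2
    rcases Nat.eq_zero_or_pos i.1 with hi0 | hipos
    · have e1 : t i.castSucc = eta ⟨0, hN⟩ - (1 + |c|) := ht0 _ (by simp [hi0])
      rcases eq_or_lt_of_le (show i.1 + 1 ≤ N by omega) with hN1 | hlt
      · have e2 : t i.succ = eta ⟨N-1, Nat.sub_lt hN one_pos⟩ + (1 + |c|) :=
          htN _ (by simp [hN1.symm])
        have : eta ⟨0, hN⟩ ≤ eta ⟨N-1, Nat.sub_lt hN one_pos⟩ :=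
          he.monotone (by simp only [Fin.le_def]; omega)
        have hc := abs_nonneg c
        rw [e1, e2]; linarith
      · have e2 : t i.succ = ζ ⟨i.1, by omega⟩ := by
          rw [htm i.succ (by simp) (by simp only [Fin.val_succ]; omega)]
          congr 1
          all_goals (apply Fin.ext; simp)
        have hζi := (hζ ⟨i.1, by omega⟩).1
        have : eta ⟨0, hN⟩ ≤ eta (idx1 ⟨i.1, by omega⟩) := he.monotone (by simp [idx1, Fin.le_def])
        have hc := abs_nonneg c
        rw [e1, e2]
        have := hζi.1
        linarith
    · have e1 : t i.castSucc = ζ ⟨i.1 - 1, by omega⟩ := by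
        rw [htm i.castSucc (by simp only [Fin.coe_castSucc]; omega)
          (by simp only [Fin.coe_castSucc]; omega)]
        congr 1
        all_goals (apply Fin.ext; simp)
      have hζ1 := (hζ ⟨i.1 - 1, by omega⟩).1
      have hup : ζ ⟨i.1 - 1, by omega⟩ < eta ⟨i.1, by omega⟩ := by
        have := hζ1.2
        simpa [idx2, (by omega : i.1 - 1 + 1 = i.1)] using this
      rcases eq_or_lt_of_le (show i.1 + 1 ≤ N by omega) with hN1 | hlt
      · have e2 : t i.succ = eta ⟨N-1, Nat.sub_lt hN one_pos⟩ + (1 + |c|) :=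
          htN _ (by simp [Fin.val_succ]; omega)
        have : eta ⟨i.1, by omega⟩ ≤ eta ⟨N-1, Nat.sub_lt hN one_pos⟩ :=
          he.monotone (by simp only [Fin.le_def]; omega)
        have hc := abs_nonneg c
        rw [e1, e2]; linarith
      · have e2 : t i.succ = ζ ⟨i.1, by omega⟩ := by
          rw [htm i.succ (by simp) (by simp only [Fin.val_succ]; omega)]
          congr 1
          all_goals (apply Fin.ext; simp)
        have hζ2 := (hζ ⟨i.1, by omega⟩).1
        have hlow : eta ⟨i.1, by omega⟩ < ζ ⟨i.1, by omega⟩ := by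
          have := hζ2.1
          simpa [idx1] using this
        rw [e1, e2]; linarith
  -- sign hypothesis
  have hsign : ∀ j : Fin (N+1), 0 < (-1:ℝ)^(N - j.1) * g (t j) := by
    intro j
    rcases Nat.eq_zero_or_pos j.1 with hj0 | hjpos
    · rw [ht0 j hj0, hj0, Nat.sub_zero]
      exact bot_sign hN he c
    · rcases eq_or_lt_of_le (show j.1 ≤ N by have := j.2; omega) with hjN | hjlt
      · rw [htN j hjN, hjN, Nat.sub_self, pow_zero, one_mul]
        exact top_sign hN he c
      · rw [htm j (by omega) (by omega)]
        have := hmid ⟨j.1 - 1, by omega⟩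
        simpa [(by omega : j.1 - 1 + 1 = j.1)] using this
  -- apply root construction
  have hgc : Continuous g := by
    exact (continuous_Pprod eta).add continuous_const
  obtain ⟨r, hrmono, hr0⟩ := exists_roots_of_signs hgc t ht hsign
  refine ⟨r, hrmono, ?_⟩
  have hpmonic : (pp eta + C c).Monic := by
    refine (pp_monic eta).add_of_left ?_
    have h1 : (C c).degree ≤ 0 := degree_C_le
    have h2 : (pp eta).degree = (N : WithBot ℕ) := by
      rw [degree_eq_natDegree (pp_monic eta).ne_zero, pp_natDegree]
    rw [h2]
    refine lt_of_le_of_lt h1 ?_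
    exact_mod_cast hN
  have hpdeg : (pp eta + C c).natDegree = N := by rw [natDegree_add_C, pp_natDegree]
  have hfac := eq_prod_of_roots hpmonic hpdeg r hrmono.injective (fun k => by
    have := hr0 k
    simp only [hgdef] at this
    simp [IsRoot, eval_add, eval_C, ← Pprod_eq_eval, this])
  intro x
  have : Pprod eta x + c = (pp eta + C c).eval x := by
    simp [eval_add, eval_C, ← Pprod_eq_eval]
  rw [this, hfac, ← pp, ← Pprod_eq_eval]


lemma simple_roots {r : Fin N → ℝ} (hr : StrictMono r) {w : ℝ} (h0 : Pprod r w = 0) :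
    deriv (Pprod r) w ≠ 0 := by
  have hsep : (pp r).Separable := by
    rw [pp]
    exact (separable_prod_X_sub_C_iff).2 hr.injective
  obtain ⟨a, b, hab⟩ := hsep
  intro hd
  rw [deriv_Pprod] at hd
  rw [Pprod_eq_eval] at h0
  have := congrArg (eval w) hab
  simp [eval_add, eval_mul, h0, hd] at this

lemma crit_struct (hN : 1 ≤ N) {eta : Fin N → ℝ} (he : StrictMono eta) :
    ∃ ζ : Fin (N-1) → ℝ, (∀ k, ζ k ∈ Set.Ioo (eta (idx1 k)) (eta (idx2 k))) ∧
      (∀ k, deriv (Pprod eta) (ζ k) = 0) ∧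
      ∀ z, deriv (Pprod eta) z = 0 → ∃ k, z = ζ k := by
  classical
  obtain ⟨ζ, hζ⟩ := rolle_choose he
  refine ⟨ζ, fun k => (hζ k).1, fun k => (hζ k).2, ?_⟩
  set dp := (pp eta).derivative with hdp
  have h1 : N - 1 + 1 = N := by omega
  have hc1 : (pp eta).coeff N = 1 := by
    have := (pp_monic eta).coeff_natDegree
    rwa [pp_natDegree] at this
  have hcoeff : dp.coeff (N-1) = N := by
    rw [hdp, coeff_derivative, h1, hc1, one_mul]
    norm_cast
  have hNpos : (0:ℝ) < N := by exact_mod_cast hN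
  have hdp0 : dp ≠ 0 := by
    intro h
    rw [h, coeff_zero] at hcoeff
    linarith
  have hdeg : dp.natDegree ≤ N - 1 := by
    have := natDegree_derivative_le (pp eta)
    rwa [pp_natDegree] at this
  -- the finset of the ζ's
  have hζmono : StrictMono ζ := by
    intro k k' hkk
    have h1 : ζ k < eta (idx2 k) := (hζ k).1.2
    have h2 : eta (idx1 k') < ζ k' := (hζ k').1.1
    have h3 : eta (idx2 k) ≤ eta (idx1 k') := he.monotone (by
      simp only [idx1, idx2, Fin.le_def]; exact hkk)
    linarith
  set T : Finset ℝ := Finset.image ζ univ with hT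
  have hTcard : T.card = N - 1 := by
    rw [hT, Finset.card_image_of_injective _ hζmono.injective, Finset.card_univ, Fintype.card_fin]
  have hTsub : T ⊆ dp.roots.toFinset := by
    intro x hx
    obtain ⟨k, _, hk⟩ := Finset.mem_image.1 hx
    rw [Multiset.mem_toFinset, mem_roots hdp0]
    have := (hζ k).2
    rw [deriv_Pprod] at this
    rw [← hk]
    exact this
  have hTeq : T = dp.roots.toFinset := by
    refine Finset.eq_of_subset_of_card_le hTsub ?_
    rw [hTcard]
    calc dp.roots.toFinset.card ≤ Multiset.card dp.roots := dp.roots.toFinset_card_le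
      _ ≤ dp.natDegree := dp.card_roots'
      _ ≤ N - 1 := hdeg
  intro z hz
  rw [deriv_Pprod] at hz
  have hzmem : z ∈ dp.roots.toFinset := by
    rw [Multiset.mem_toFinset, mem_roots hdp0]; exact hz
  rw [← hTeq, hT] at hzmem
  obtain ⟨k, _, hk⟩ := Finset.mem_image.1 hzmem
  exact ⟨k, hk.symm⟩


lemma count_contra (c : Fin N → ℕ) (k : ℕ)
    (hmono : Monotone c)
    (hub : ∀ j, c j ≤ N)
    (hpar : ∀ j, (c j) % 2 = (N-1) % 2)
    (hcap0 : ∀ j j' : Fin N, j < j' → ¬(c j = 0 ∧ c j' = 0))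
    (hcap2 : ∀ j j' j'' : Fin N, j < j' → j' < j'' → c j ≠ c j'')
    (hskip : ∀ j, c j ≠ k + 1)
    (hkpar : (k+1) % 2 = (N-1) % 2)
    (hkle : k + 1 ≤ N - 1) : False := by
  have hN : 2 ≤ N := by omega
  have hlow : ∀ n, ∀ j : Fin N, j.1 = n → n ≤ c j := by
    intro n
    induction n using Nat.strong_induction_on with
    | _ n ih =>
      match n with
      | 0 => intro j _; exact Nat.zero_le _
      | 1 =>
        intro j hj
        by_contra hcon
        have hcj : c j = 0 := by omega
        have hjlt : (⟨0, by omega⟩ : Fin N) < j := by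
          rw [Fin.lt_def]; simp; omega
        have hle : c ⟨0, by omega⟩ ≤ c j := hmono hjlt.le
        exact hcap0 ⟨0, by omega⟩ j hjlt ⟨by omega, hcj⟩
      | (n+2) =>
        intro j hj
        have hj2 := j.2
        have h1 : n ≤ c ⟨n, by omega⟩ := ih n (by omega) ⟨n, by omega⟩ rfl
        have h2 : c ⟨n, by omega⟩ ≠ c j :=
          hcap2 ⟨n, by omega⟩ ⟨n+1, by omega⟩ j
            (by rw [Fin.lt_def]; simp) (by rw [Fin.lt_def]; simp; omega)
        have h3 : c ⟨n, by omega⟩ ≤ c j := hmono (by rw [Fin.le_def]; simp; omega)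
        have h4 := hpar ⟨n, by omega⟩
        have h5 := hpar j
        omega
  have hup : ∀ m, ∀ j : Fin N, j.1 = N - 1 - m → c j ≤ j.1 + 1 := by
    intro m
    induction m using Nat.strong_induction_on with
    | _ m ih =>
      intro j hj
      have hj2 := j.2
      by_cases htr : N - 1 - j.1 < m
      · exact ih (N - 1 - j.1) htr j (by omega)
      · match m with
        | 0 => have := hub j; omega
        | 1 =>
          have := hub j
          have := hpar j
          omega
        | (m+2) =>
          have hidx : j.1 + 2 < N := by omega
          have h1 : c ⟨j.1 + 2, hidx⟩ ≤ j.1 + 3 :=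
            ih m (by omega) ⟨j.1 + 2, hidx⟩ (by simp; omega)
          have h2 : c j ≠ c ⟨j.1 + 2, hidx⟩ :=
            hcap2 j ⟨j.1 + 1, by omega⟩ ⟨j.1 + 2, hidx⟩
              (by rw [Fin.lt_def]; simp) (by rw [Fin.lt_def]; simp)
          have h3 : c j ≤ c ⟨j.1 + 2, hidx⟩ := hmono (by rw [Fin.le_def]; simp)
          have h4 := hpar j
          have h5 := hpar ⟨j.1 + 2, hidx⟩
          omega
  have hk1 : k < N := by omega
  have l1 := hlow k ⟨k, hk1⟩ rfl
  have l2 := hup (N - 1 - k) ⟨k, hk1⟩ (by simp; omega)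
  have l3 := hpar ⟨k, hk1⟩
  have l4 := hskip ⟨k, hk1⟩
  simp at l2
  omega


lemma lemB (hN : 1 ≤ N) {ε : ℝ} (hε : 0 < ε) {lam r : Fin N → ℝ}
    (hlam : StrictMono lam) (hr : StrictMono r)
    (hfun : ∀ x, Pprod lam x + 4 * ε = Pprod r x) :
    ∀ z, deriv (Pprod lam) z = 0 → 0 < Pprod lam z ∨ Pprod lam z < -(4*ε) := by
  classical
  have hderiv_eq : ∀ w, deriv (Pprod r) w = deriv (Pprod lam) w := by
    intro w
    have : Pprod r = fun x => Pprod lam x + 4*ε := funext fun x => (hfun x).symm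
    rw [this, deriv_add_const]
  obtain ⟨ζ, hζIoo, hζcrit, hζall⟩ := crit_struct hN hlam
  intro z hz
  obtain ⟨k, rfl⟩ := hζall z hz
  have hIoo := hζIoo k
  have hsign := sign_Pprod_Ioo hlam k hIoo
  rcases Nat.even_or_odd (N - (k.1+1)) with hev | hod
  · left
    rw [hev.neg_one_pow, one_mul] at hsign
    exact hsign
  · right
    rw [hod.neg_one_pow] at hsign
    have hPneg : Pprod lam (ζ k) < 0 := by linarith
    by_contra hcon
    push_neg at hcon
    have hne4 : Pprod lam (ζ k) ≠ -(4*ε) := by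
      intro h4
      have hroot : Pprod r (ζ k) = 0 := by rw [← hfun]; linarith
      exact simple_roots hr hroot (by rw [hderiv_eq]; exact hz)
    have hgt4 : -(4*ε) < Pprod lam (ζ k) := lt_of_le_of_ne hcon (Ne.symm hne4)
    set a := lam (idx1 k) with hadef
    set b := lam (idx2 k) with hbdef
    have hab : a < b := hlam (by simp [idx1, idx2, Fin.lt_def])
    obtain ⟨m, hmIcc, hmmin⟩ := isCompact_Icc.exists_isMinOn (Set.nonempty_Icc.2 hab.le)
      (continuous_Pprod lam).continuousOn
    have hζIcc : ζ k ∈ Set.Icc a b := Set.Ioo_subset_Icc_self hIoo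
    have hmle : Pprod lam m ≤ Pprod lam (ζ k) := hmmin hζIcc
    have hm0 : Pprod lam m < 0 := lt_of_le_of_lt hmle hPneg
    have hmIoo : m ∈ Set.Ioo a b := by
      refine ⟨lt_of_le_of_ne hmIcc.1 ?_, lt_of_le_of_ne hmIcc.2 ?_⟩
      · intro h; rw [← h] at hm0; rw [hadef, Pprod_root] at hm0; linarith
      · intro h; rw [h] at hm0; rw [hbdef, Pprod_root] at hm0; linarith
    have hlocmin : IsLocalMin (Pprod lam) m :=
      hmmin.isLocalMin (Filter.mem_of_superset (Ioo_mem_nhds hmIoo.1 hmIoo.2) Set.Ioo_subset_Icc_self)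
    obtain ⟨k', hk'⟩ := hζall m hlocmin.deriv_eq_zero
    have hkk : k' = k := by
      have h1 := hζIoo k'
      rw [← hk'] at h1
      by_contra hne
      rcases lt_or_gt_of_ne (fun h : k'.1 = k.1 => hne (Fin.ext h)) with hlt | hgt
      · have : lam (idx2 k') ≤ lam (idx1 k) := hlam.monotone (by
          simp only [idx1, idx2, Fin.le_def]; omega)
        have := h1.2; have := hmIoo.1
        simp only [hadef] at *
        linarith
      · have : lam (idx2 k) ≤ lam (idx1 k') := hlam.monotone (by
          simp only [idx1, idx2, Fin.le_def]; omega)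
        have := h1.1; have := hmIoo.2
        simp only [hbdef] at *
        linarith
    rw [hkk] at hk'
    rw [← hk'] at hmle hPneg hgt4 hne4
    -- positivity of Pprod r on [a,b]
    have hpos : ∀ x ∈ Set.Icc a b, 0 < Pprod r x := by
      intro x hx
      have h1 : Pprod lam m ≤ Pprod lam x := hmmin hx
      rw [← hfun]
      linarith
    -- counting setup
    set cnt : Fin N → ℕ := fun j => (univ.filter (fun i => lam i < r j)).card with hcnt
    have hne_rl : ∀ (j : Fin N) (i : Fin N), r j ≠ lam i := by
      intro j i h
      have h1 : Pprod r (r j) = 0 := Pprod_root r j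
      have h2 : Pprod r (lam i) = 4 * ε := by rw [← hfun, Pprod_root]; ring
      rw [h, h2] at h1
      linarith
    have hQval : ∀ j : Fin N, Pprod lam (r j) = -(4*ε) := by
      intro j
      have := hfun (r j)
      rw [Pprod_root] at this
      linarith
    have hmono : Monotone cnt := by
      intro j j' hjj
      apply Finset.card_le_card
      intro i hi
      simp only [Finset.mem_filter, Finset.mem_univ, true_and] at hi ⊢
      exact lt_of_lt_of_le hi (hr.monotone hjj)
    have hub : ∀ j, cnt j ≤ N := by
      intro j
      calc cnt j ≤ (univ : Finset (Fin N)).card := Finset.card_le_card (Finset.filter_subset _ _)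
        _ = N := by rw [Finset.card_univ, Fintype.card_fin]
    have hpar : ∀ j, (cnt j) % 2 = (N-1) % 2 := by
      intro j
      have hsgn := sign_Pprod lam (r j) (hne_rl j)
      have hcompl : (univ.filter (fun i => r j < lam i)).card = N - cnt j := by
        have hsplit := Finset.card_filter_add_card_filter_not
          (s := (univ : Finset (Fin N))) (p := fun i : Fin N => lam i < r j)
        have heq : (univ.filter (fun i : Fin N => ¬ lam i < r j))
            = (univ.filter (fun i : Fin N => r j < lam i)) := by
          ext i
          simp only [Finset.mem_filter, Finset.mem_univ, true_and, not_lt]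
          exact ⟨fun h => lt_of_le_of_ne h (hne_rl j i), fun h => h.le⟩
        rw [heq, Finset.card_univ, Fintype.card_fin] at hsplit
        have hc : cnt j = (univ.filter (fun i : Fin N => lam i < r j)).card := rfl
        omega
      rw [hcompl] at hsgn
      have hodd : Odd (N - cnt j) := by
        rcases Nat.even_or_odd (N - cnt j) with he | ho
        · rw [he.neg_one_pow, one_mul] at hsgn
          have := hQval j
          linarith
        · exact ho
      have := hub j
      obtain ⟨t, ht⟩ := hodd
      omega
    -- two roots below everything is impossible
    have htwo : ∀ p q : Fin N, p < q → cnt p = 0 → cnt q = 0 → False := by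
      intro p q hpq hp hq
      have hqlt : ∀ i, r q < lam i := by
        intro i
        have hni : ¬ lam i < r q := by
          intro h
          have hmem : i ∈ univ.filter (fun i => lam i < r q) := by simp [h]
          have := Finset.card_ne_zero_of_mem hmem
          exact this hq
        exact lt_of_le_of_ne (not_lt.1 hni) (hne_rl q i)
      obtain ⟨w, hwIoo, hw0⟩ := exists_deriv_eq_zero (hr hpq)
        (continuous_Pprod r).continuousOn (by rw [Pprod_root, Pprod_root])
      rw [hderiv_eq] at hw0
      obtain ⟨k'', hk''⟩ := hζall w hw0
      have h1 := (hζIoo k'').1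
      rw [← hk''] at h1
      have h2 : r q < lam (idx1 k'') := hqlt _
      have := hwIoo.2
      linarith
    have hcard_eq : ∀ q : Fin N, (univ.filter (fun i => lam i < r q)).card = cnt q :=
      fun q => rfl
    have htwo' : ∀ p q : Fin N, p < q → ¬(cnt p = 0 ∧ cnt q = 0) :=
      fun p q h hc => htwo p q h hc.1 hc.2
    have hcap2 : ∀ p p' p'' : Fin N, p < p' → p' < p'' → cnt p ≠ cnt p'' := by
      intro p p' p'' h1 h2 heq
      by_cases hv0 : cnt p = 0
      · exact htwo p p'' (h1.trans h2) hv0 (by rw [← heq]; exact hv0)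
      · set v := cnt p with hv
        have hvpos : 1 ≤ v := Nat.pos_of_ne_zero hv0
        have hvle : v ≤ N := hub p
        have hvne : v ≠ N := by have := hpar p; rw [← hv] at this; omega
        have hv' : cnt p' = v := le_antisymm (heq ▸ hmono h2.le) (hmono h1.le)
        have hv'' : cnt p'' = v := by rw [← heq]
        have hreg : ∀ (q : Fin N), cnt q = v →
            lam ⟨v-1, by omega⟩ < r q ∧ r q < lam ⟨v, by omega⟩ := by
          intro q hqv
          constructor
          · exact (region hlam (hne_rl q) ⟨v-1, by omega⟩).2
              (by have hcq := hcard_eq q; simp only [Fin.val_mk]; omega)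
          · have hnl : ¬ lam ⟨v, by omega⟩ < r q := by
              intro h
              have := (region hlam (hne_rl q) ⟨v, by omega⟩).1 h
              have hcq := hcard_eq q
              simp only [Fin.val_mk] at this
              omega
            exact lt_of_le_of_ne (not_lt.1 hnl) (hne_rl q _)
        have hb1 := hreg p hv.symm
        have hb2 := hreg p' hv'
        have hb3 := hreg p'' hv''
        obtain ⟨w1, hw1I, hw1⟩ := exists_deriv_eq_zero (hr h1)
          (continuous_Pprod r).continuousOn (by rw [Pprod_root, Pprod_root])
        obtain ⟨w2, hw2I, hw2⟩ := exists_deriv_eq_zero (hr h2)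
          (continuous_Pprod r).continuousOn (by rw [Pprod_root, Pprod_root])
        rw [hderiv_eq] at hw1 hw2
        obtain ⟨a1, ha1⟩ := hζall w1 hw1
        obtain ⟨a2, ha2⟩ := hζall w2 hw2
        have hloc : ∀ (aa : Fin (N-1)) (w : ℝ), w = ζ aa →
            lam ⟨v-1, by omega⟩ < w → w < lam ⟨v, by omega⟩ → aa.1 = v-1 := by
          intro aa w hw hlw hwv
          have hI := hζIoo aa
          rw [← hw] at hI
          by_contra hnea
          rcases Nat.lt_or_ge aa.1 (v-1) with hlt | hge
          · have hle : lam (idx2 aa) ≤ lam ⟨v-1, by omega⟩ := hlam.monotone (by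
              simp only [idx2, Fin.le_def]; omega)
            have := hI.2
            linarith
          · have hge' : v ≤ aa.1 := by omega
            have hle : lam ⟨v, by omega⟩ ≤ lam (idx1 aa) := hlam.monotone (by
              simp only [idx1, Fin.le_def]; omega)
            have := hI.1
            linarith
        have e1 : a1.1 = v-1 := hloc a1 w1 ha1 (by linarith [hb1.1, hw1I.1])
          (by linarith [hb2.2, hw1I.2])
        have e2 : a2.1 = v-1 := hloc a2 w2 ha2 (by linarith [hb2.1, hw2I.1])
          (by linarith [hb3.2, hw2I.2])
        have haa : a1 = a2 := Fin.ext (by omega)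
        rw [haa, ← ha2] at ha1
        have hx1 := hw1I.2
        have hx2 := hw2I.1
        rw [ha1] at hx1
        linarith
    have hk2 := k.2
    have hskip : ∀ j, cnt j ≠ k.1 + 1 := by
      intro j hj
      have h1 := (region hlam (hne_rl j) ⟨k.1, by omega⟩).2 (by have hcq := hcard_eq j; simp only [Fin.val_mk]; omega)
      have h2 : ¬ lam ⟨k.1+1, by omega⟩ < r j := by
        intro h
        have := (region hlam (hne_rl j) ⟨k.1+1, by omega⟩).1 h
        have hcq := hcard_eq j
        simp only [Fin.val_mk] at this
        omega
      have h2' : r j < lam ⟨k.1+1, by omega⟩ := lt_of_le_of_ne (not_lt.1 h2) (hne_rl j _)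
      have hpos' := hpos (r j) ⟨le_of_lt h1, le_of_lt h2'⟩
      rw [Pprod_root r j] at hpos'
      linarith
    have hkpar : (k.1+1) % 2 = (N-1) % 2 := by
      obtain ⟨t, ht⟩ := hod
      omega
    exact count_contra cnt k.1 hmono hub hpar htwo' hcap2 hskip hkpar (by omega)



lemma uniq {eta eta' : Fin N → ℝ} (he : StrictMono eta) (he' : StrictMono eta')
    (h : ∀ x, Pprod eta x = Pprod eta' x) : eta = eta' := by
  have hp : pp eta = pp eta' := Polynomial.funext (fun x => by
    rw [← Pprod_eq_eval, ← Pprod_eq_eval, h])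
  have key : ∀ f : Fin N → ℝ, pp f = ((univ.val.map f).map (fun a => X - C a)).prod := by
    intro f
    rw [Multiset.map_map, pp, Finset.prod_eq_multiset_prod]
    rfl
  have hroots : (univ.val.map eta) = (univ.val.map eta') := by
    have h2 : ((univ.val.map eta).map (fun a => X - C a)).prod.roots
        = ((univ.val.map eta').map (fun a => X - C a)).prod.roots := by
      rw [← key eta, ← key eta', hp]
    rwa [roots_multiset_prod_X_sub_C, roots_multiset_prod_X_sub_C] at h2
  rw [Fin.univ_val_map, Fin.univ_val_map] at hroots
  have hperm : List.Perm (List.ofFn eta) (List.ofFn eta') := Multiset.coe_eq_coe.1 hroots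
  have hs1 : (List.ofFn eta).SortedLE := List.sortedLE_ofFn_iff.2 he.monotone
  have hs2 : (List.ofFn eta').SortedLE := List.sortedLE_ofFn_iff.2 he'.monotone
  exact List.ofFn_injective (List.Perm.eq_of_sortedLE hs1 hs2 hperm)

end Adm

/-- **Characterisation of the admissible set via critical values**, together with
uniqueness of the vector `η`. -/
theorem admissible_characterisation (N : ℕ) (hN : 1 ≤ N) (ε : ℝ) (hε : 0 < ε)
    (lam : Fin N → ℝ) (hlam : StrictMono lam) :
    ((∃ r : Fin N → ℝ, StrictMono r ∧
        ∀ x : ℝ, (∏ k, (x - lam k)) + 4 * ε = ∏ k, (x - r k)) ↔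
      ∃ eta : Fin N → ℝ, EtaCond N ε lam eta) ∧
    (∀ eta eta' : Fin N → ℝ, EtaCond N ε lam eta → EtaCond N ε lam eta' → eta = eta') := by
  constructor
  · constructor
    · rintro ⟨r, hr, hfun⟩
      have hfun' : ∀ x, Pprod lam x + 4 * ε = Pprod r x := hfun
      have hB := Adm.lemB hN hε hlam hr hfun'
      obtain ⟨eta, heta, hetafun⟩ := Adm.lemA hN hlam (2*ε) (fun z hz => by
        rcases hB z hz with hpos | hneg
        · nlinarith
        · nlinarith)
      refine ⟨eta, heta, ?_, ?_⟩
      · intro x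
        have h1 : (∏ k, (x - lam k)) = Pprod lam x := rfl
        have h2 := hetafun x
        rw [h1]
        linarith
      · intro z hz
        have hee : Pprod eta = fun x => Pprod lam x + 2*ε := funext fun x => (hetafun x).symm
        have hdz : deriv (Pprod lam) z = 0 := by rw [hee, deriv_add_const] at hz; exact hz
        have hgz : Pprod eta z = Pprod lam z + 2*ε := (hetafun z).symm
        rw [hgz]
        rcases hB z hdz with hpos | hneg
        · rw [abs_of_pos (by linarith)]; linarith
        · rw [abs_of_neg (by linarith)]; linarith
    · rintro ⟨eta, hmono, hfun2, hcrit⟩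
      obtain ⟨r, hrmono, hrfun⟩ := Adm.lemA hN hmono (2*ε) (fun z hz => by
        have habs := hcrit z hz
        rcases le_or_gt (Pprod eta z) 0 with hle | hlt
        · rw [abs_of_nonpos hle] at habs
          nlinarith
        · rw [abs_of_pos hlt] at habs
          nlinarith)
      refine ⟨r, hrmono, fun x => ?_⟩
      have h1 := hfun2 x
      have h2 := hrfun x
      have h3 : (∏ k, (x - r k)) = Pprod r x := rfl
      have h4 : (∏ k, (x - lam k)) = ∏ k, (x - lam k) := rfl
      rw [h3]
      linarith
  · intro eta eta' h h'
    refine Adm.uniq h.1 h'.1 (fun x => ?_)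
    have h1 := h.2.1 x
    have h2 := h'.2.1 x
    linarith
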